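/- arXiv:2104.09201 — 3 statements merged into one kernel-verified Lean document; each statement's English description precedes it below -/
import Mathlib

section
/- Let G be the semidirect product (ℤ/4ℤ × ℤ/4ℤ) ⋊ ℤ/3ℤ, where the generator of ℤ/3ℤ acts on ℤ/4ℤ × ℤ/4ℤ by the matrix [[0,1],[-1,-1]] over ℤ/4ℤ (that is, (a,b) ↦ (−b, a−b)). Then there exists a normal subgroup W of Aut(G) such that W is an elementary abelian 2-group of order 2⁴ = 16 and Aut(G)/W is isomorphic to the symmetric group S₄. -/
set_option maxRecDepth 1000000
set_option maxHeartbeats 8000000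


/-- The additive automorphism `(a,b) ↦ (-b, a-b)` of `ℤ/4 × ℤ/4`, i.e. the action of the
matrix `[[0,1],[-1,-1]]` over `ℤ/4ℤ`. -/
def Tmat : (ZMod 4 × ZMod 4) ≃+ (ZMod 4 × ZMod 4) where
  toFun x := (-x.2, x.1 - x.2)
  invFun x := (x.2 - x.1, -x.1)
  left_inv x := by
    apply Prod.ext <;> simp
  right_inv x := by
    apply Prod.ext <;> simp
  map_add' x y := by
    apply Prod.ext <;> simp <;> ring

/-- `Tmat` as a multiplicative automorphism of `Multiplicative (ℤ/4 × ℤ/4)`. -/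
def Tmul : MulAut (Multiplicative (ZMod 4 × ZMod 4)) :=
  AddEquiv.toMultiplicative Tmat

lemma Tmul_cube : Tmul ^ 3 = 1 := by
  apply MulEquiv.ext
  decide

/-- The action of `ℤ/3ℤ` on `ℤ/4 × ℤ/4` by the matrix `[[0,1],[-1,-1]]`, as a homomorphism
`Multiplicative (ℤ/3ℤ) →* MulAut (Multiplicative (ℤ/4 × ℤ/4))`. -/
def actZ3 : Multiplicative (ZMod 3) →* MulAut (Multiplicative (ZMod 4 × ZMod 4)) :=
  AddMonoidHom.toMultiplicativeLeft
    (ZMod.lift 3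
      ⟨zmultiplesHom (Additive (MulAut (Multiplicative (ZMod 4 × ZMod 4))))
          (Additive.ofMul Tmul),
        by
          show (3 : ℤ) • Additive.ofMul Tmul = 0
          have h : Tmul ^ (3 : ℤ) = 1 := by
            rw [show (3 : ℤ) = ((3 : ℕ) : ℤ) by norm_num, zpow_natCast, Tmul_cube]
          rw [← ofMul_zpow, h, ofMul_one]⟩)

/-- `G = (ℤ/4 × ℤ/4) ⋊ ℤ/3`, the generator of `ℤ/3` acting by the matrix
`[[0,1],[-1,-1]]` over `ℤ/4ℤ`. -/
def Gsd := Multiplicative (ZMod 4 × ZMod 4) ⋊[actZ3] Multiplicative (ZMod 3)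

instance : Group Gsd := by unfold Gsd; infer_instance


/-! Instances -/
def gequiv : Gsd ≃ (Multiplicative (ZMod 4 × ZMod 4)) × Multiplicative (ZMod 3) where
  toFun g := (g.left, g.right)
  invFun p := ⟨p.1, p.2⟩
  left_inv _ := rfl
  right_inv _ := rfl
instance : Fintype Gsd := Fintype.ofEquiv _ gequiv.symm
instance : DecidableEq Gsd := fun g h =>
  decidable_of_iff (g.left = h.left ∧ g.right = h.right)
    (by constructor
        · rintro ⟨h1, h2⟩; exact SemidirectProduct.ext h1 h2
        · rintro rfl; exact ⟨rfl, rfl⟩)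

/-! Fast model of multiplication and inversion -/
def Tm (x : ZMod 4 × ZMod 4) : ZMod 4 × ZMod 4 := (-x.2, x.1 - x.2)
def tk (k : ZMod 3) (x : ZMod 4 × ZMod 4) : ZMod 4 × ZMod 4 :=
  if k = 0 then x else if k = 1 then Tm x else Tm (Tm x)
def mcore (x : ZMod 4 × ZMod 4) (k : ZMod 3) (y : ZMod 4 × ZMod 4) : ZMod 4 × ZMod 4 :=
  x + tk k y
def fmul (g h : Gsd) : Gsd :=
  ⟨Multiplicative.ofAdd (mcore (Multiplicative.toAdd g.left) (Multiplicative.toAdd g.right)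
      (Multiplicative.toAdd h.left)),
   g.right * h.right⟩
def finv (g : Gsd) : Gsd :=
  ⟨Multiplicative.ofAdd (tk (- Multiplicative.toAdd g.right) (- Multiplicative.toAdd g.left)),
   g.right⁻¹⟩
lemma mul_eq : ∀ g h : Gsd, g * h = fmul g h := by decide
lemma inv_eq : ∀ g : Gsd, g⁻¹ = finv g := by decide

/-! Basic characteristic predicates -/
def nm (g : Gsd) : Prop := fmul g g = 1
instance (g : Gsd) : Decidable (nm g) := by unfold nm; infer_instance
def NM (g : Gsd) : Prop := g * g = 1
lemma nm_iff (g : Gsd) : nm g ↔ NM g := by unfold nm NM; rw [mul_eq]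

def sim (g h : Gsd) : Prop := nm (fmul g (finv h)) ∨ nm (fmul g h)
instance (g h : Gsd) : Decidable (sim g h) := by unfold sim; infer_instance
def SIM (g h : Gsd) : Prop := NM (g * h⁻¹) ∨ NM (g * h)
lemma sim_iff (g h : Gsd) : sim g h ↔ SIM g h := by
  unfold sim SIM; rw [nm_iff, nm_iff, ← inv_eq, ← mul_eq, ← mul_eq]

def o3 (g : Gsd) : Prop := fmul (fmul g g) g = 1 ∧ g ≠ 1
instance (g : Gsd) : Decidable (o3 g) := by unfold o3; infer_instance
def O3 (g : Gsd) : Prop := g * g * g = 1 ∧ g ≠ 1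
lemma o3_iff (g : Gsd) : o3 g ↔ O3 g := by unfold o3 O3; rw [mul_eq, mul_eq]

def grep : Fin 4 → Gsd
  | 0 => ⟨Multiplicative.ofAdd (0, 0), Multiplicative.ofAdd 1⟩
  | 1 => ⟨Multiplicative.ofAdd (0, 1), Multiplicative.ofAdd 1⟩
  | 2 => ⟨Multiplicative.ofAdd (0, 1), Multiplicative.ofAdd 2⟩
  | 3 => ⟨Multiplicative.ofAdd (1, 0), Multiplicative.ofAdd 1⟩

def cl (g : Gsd) : Fin 4 :=
  if sim g (grep 0) then 0 else if sim g (grep 1) then 1 else if sim g (grep 2) then 2 else 3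

lemma clrep : ∀ i : Fin 4, cl (grep i) = i := by decide
lemma o3rep : ∀ i : Fin 4, o3 (grep i) := by decide

lemma L1 : ∀ g h : Gsd, o3 g → o3 h → (sim g h ↔ cl g = cl h) := by decide

lemma nm_mul' : ∀ a b : Gsd, nm a → nm b → nm (fmul a b) := by decide
lemma nm_conj' : ∀ g n : Gsd, nm n → nm (fmul (fmul g n) (finv g)) := by decide

lemma D1 : ∀ x : Gsd, o3 x → ∃ y : Gsd, o3 y ∧ o3 (fmul x y) ∧
    ¬ nm (fmul (fmul (finv x) y) (finv (fmul x y))) ∧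
    ¬ nm (fmul (fmul (finv x) y) (fmul x y)) ∧
    ¬ nm (fmul (fmul (finv x) (finv y)) (finv (fmul x y))) ∧
    ¬ nm (fmul (fmul (finv x) (finv y)) (fmul x y)) := by decide

def dx (g : Gsd) : Gsd :=
  if Multiplicative.toAdd g.right = 0 then ⟨g.left, Multiplicative.ofAdd 1⟩ else g
def dy (g : Gsd) : Gsd :=
  if Multiplicative.toAdd g.right = 0 then ⟨1, Multiplicative.ofAdd 2⟩ else 1

lemma dxdy : ∀ g : Gsd, fmul (fmul (dx g) (dx g)) (dx g) = 1 ∧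
    fmul (fmul (dy g) (dy g)) (dy g) = 1 ∧ g = fmul (dx g) (dy g) := by decide

/-! The 16-parameter family -/
def pa := ZMod 2 × ZMod 2 × ZMod 2 × ZMod 2
instance : Fintype pa := by unfold pa; infer_instance
instance : DecidableEq pa := by unfold pa; infer_instance

def sc (b : ZMod 2) (v : ZMod 4 × ZMod 4) : ZMod 4 × ZMod 4 :=
  if b = 1 then (v.1 + v.1, v.2 + v.2) else (0, 0)
def Lp (p : pa) (x : ZMod 4 × ZMod 4) : ZMod 4 × ZMod 4 :=
  x + sc p.1 x + sc p.2.1 (Tm x)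
def ck (p : pa) (k : ZMod 3) : ZMod 4 × ZMod 4 :=
  let d : ZMod 4 × ZMod 4 := (if p.2.2.1 = 1 then 2 else 0, if p.2.2.2 = 1 then 2 else 0)
  if k = 0 then (0, 0) else if k = 1 then d else d + Tm d
def wcore (p : pa) (x : ZMod 4 × ZMod 4) (k : ZMod 3) : ZMod 4 × ZMod 4 :=
  Lp p x + ck p k
def wfun (p : pa) (g : Gsd) : Gsd :=
  ⟨Multiplicative.ofAdd (wcore p (Multiplicative.toAdd g.left) (Multiplicative.toAdd g.right)),
   g.right⟩

lemma Lp_add : ∀ (p : pa) (x y : ZMod 4 × ZMod 4), Lp p (x + y) = Lp p x + Lp p y := by decide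
lemma Lp_tk : ∀ (p : pa) (k : ZMod 3) (y : ZMod 4 × ZMod 4),
    Lp p (tk k y) = tk k (Lp p y) := by decide
lemma tk_add : ∀ (k : ZMod 3) (x y : ZMod 4 × ZMod 4), tk k (x + y) = tk k x + tk k y := by
  decide
lemma ck_co : ∀ (p : pa) (k l : ZMod 3), ck p (k + l) = ck p k + tk k (ck p l) := by decide

lemma w_key (p : pa) (x y : ZMod 4 × ZMod 4) (k l : ZMod 3) :
    wcore p (mcore x k y) (k + l) = mcore (wcore p x k) k (wcore p y l) := by
  unfold wcore mcore
  rw [Lp_add, Lp_tk, ck_co, tk_add]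
  abel

def ga : Gsd := ⟨Multiplicative.ofAdd (1, 0), 1⟩
def gs : Gsd := ⟨1, Multiplicative.ofAdd 1⟩

lemma w_hom (p : pa) (g h : Gsd) : wfun p (fmul g h) = fmul (wfun p g) (wfun p h) :=
  SemidirectProduct.ext
    (congrArg Multiplicative.ofAdd
      (w_key p (Multiplicative.toAdd g.left) (Multiplicative.toAdd h.left)
        (Multiplicative.toAdd g.right) (Multiplicative.toAdd h.right)))
    rfl
lemma w_invol : ∀ p : pa, ∀ g : Gsd, wfun p (wfun p g) = g := by decide
lemma w_W : ∀ p : pa, ∀ g : Gsd, nm (fmul (wfun p g) (finv g)) := by decide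
lemma w_inj : ∀ p q : pa, wfun p ga = wfun q ga → wfun p gs = wfun q gs → p = q := by decide
lemma w_surj : ∀ u v : Gsd, nm (fmul u (finv ga)) → nm (fmul v (finv gs)) →
    ∃ p : pa, wfun p ga = u ∧ wfun p gs = v := by decide

/-! The omega automorphisms -/
def om (p : pa) : MulAut Gsd where
  toFun := wfun p
  invFun := wfun p
  left_inv := w_invol p
  right_inv := w_invol p
  map_mul' := fun g h => by
    show wfun p (g * h) = wfun p g * wfun p h
    rw [mul_eq, w_hom, ← mul_eq]

/-! Two explicit automorphisms realizing a 4-cycle and a swap -/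
def afun (A B c1 c2 : ZMod 4 × ZMod 4) (g : Gsd) : Gsd :=
  let x := Multiplicative.toAdd g.left
  let k := Multiplicative.toAdd g.right
  let d : ZMod 4 × ZMod 4 := if k = 0 then (0, 0) else if k = 1 then c1 else c2
  ⟨Multiplicative.ofAdd (A.1 * x.1 + B.1 * x.2 + d.1, A.2 * x.1 + B.2 * x.2 + d.2),
   Multiplicative.ofAdd (k + k)⟩

def cfun := afun (1, 0) (3, 3) (1, 0) (0, 3)
def cinv := afun (1, 0) (3, 3) (3, 3) (3, 0)
def tfun := afun (0, 1) (1, 0) (1, 0) (0, 3)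

lemma c_hom : ∀ g h : Gsd, cfun (fmul g h) = fmul (cfun g) (cfun h) := by decide
lemma c_li : ∀ g : Gsd, cinv (cfun g) = g := by decide
lemma c_ri : ∀ g : Gsd, cfun (cinv g) = g := by decide
lemma t_hom : ∀ g h : Gsd, tfun (fmul g h) = fmul (tfun g) (tfun h) := by decide
lemma t_invol : ∀ g : Gsd, tfun (tfun g) = g := by decide

def phic : MulAut Gsd where
  toFun := cfun
  invFun := cinv
  left_inv := c_li
  right_inv := c_ri
  map_mul' := fun g h => by
    show cfun (g * h) = cfun g * cfun h
    rw [mul_eq, c_hom, ← mul_eq]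

def phit : MulAut Gsd where
  toFun := tfun
  invFun := tfun
  left_inv := t_invol
  right_inv := t_invol
  map_mul' := fun g h => by
    show tfun (g * h) = tfun g * tfun h
    rw [mul_eq, t_hom, ← mul_eq]

/-! Structural lemmas about automorphisms -/
lemma map_NM (φ : MulAut Gsd) {g : Gsd} (h : NM g) : NM (φ g) := by
  unfold NM at *; rw [← map_mul, h, map_one]

lemma map_o3 (φ : MulAut Gsd) {g : Gsd} (h : o3 g) : o3 (φ g) := by
  rw [o3_iff] at h ⊢
  refine ⟨by rw [← map_mul, ← map_mul, h.1, map_one], fun he => h.2 ?_⟩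
  have := φ.injective (he.trans (map_one φ).symm)
  exact this

lemma map_sim (φ : MulAut Gsd) {g h : Gsd} (hs : sim g h) : sim (φ g) (φ h) := by
  rw [sim_iff] at hs ⊢
  rcases hs with h1 | h1
  · exact Or.inl (by rw [← map_inv, ← map_mul]; exact map_NM φ h1)
  · exact Or.inr (by rw [← map_mul]; exact map_NM φ h1)

lemma cl_map (φ : MulAut Gsd) {g h : Gsd} (hg : o3 g) (hh : o3 h) (e : cl g = cl h) :
    cl (φ g) = cl (φ h) :=
  (L1 _ _ (map_o3 φ hg) (map_o3 φ hh)).mp (map_sim φ ((L1 _ _ hg hh).mpr e))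

lemma inv_cl (ψ : MulAut Gsd) (i : Fin 4) : cl (ψ⁻¹ (grep (cl (ψ (grep i))))) = i := by
  have hg := map_o3 ψ (o3rep i)
  have e1 : cl (grep (cl (ψ (grep i)))) = cl (ψ (grep i)) := clrep _
  have e2 := cl_map ψ⁻¹ (o3rep _) hg e1
  rw [e2, MulAut.inv_apply_self, clrep]

/-! The homomorphism to S4 -/
def fhom : MulAut Gsd →* Equiv.Perm (Fin 4) :=
  MonoidHom.mk'
    (fun φ => ⟨fun i => cl (φ (grep i)), fun i => cl (φ⁻¹ (grep i)), inv_cl φ,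
      fun i => by have := inv_cl φ⁻¹ i; rwa [inv_inv] at this⟩)
    (fun φ ψ => Equiv.ext fun i => by
      show cl ((φ * ψ) (grep i)) = cl (φ (grep (cl (ψ (grep i)))))
      have h : (φ * ψ) (grep i) = φ (ψ (grep i)) := rfl
      rw [h]
      exact cl_map φ (map_o3 ψ (o3rep i)) (o3rep _) (clrep _).symm)

lemma mem_ker_iff (φ : MulAut Gsd) : φ ∈ fhom.ker ↔ ∀ i, cl (φ (grep i)) = i := by
  rw [MonoidHom.mem_ker]
  constructor
  · intro h i
    have := Equiv.ext_iff.mp h i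
    exact this
  · intro h
    exact Equiv.ext fun i => by exact h i

/-! Generators and generation -/
def ea (g : Gsd) : ℕ := (Multiplicative.toAdd g.left).1.val
def eb (g : Gsd) : ℕ := (Multiplicative.toAdd g.left).2.val
def ec (g : Gsd) : ℕ := (Multiplicative.toAdd g.right).val

lemma decomp : ∀ g : Gsd, g = ga ^ ea g * (gs * ga * gs⁻¹) ^ eb g * gs ^ ec g := by decide

lemma gen_eq (φ ψ : MulAut Gsd) (h1 : φ ga = ψ ga) (h2 : φ gs = ψ gs) : φ = ψ := by
  apply MulEquiv.ext
  intro g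
  rw [decomp g]
  simp only [map_mul, map_pow, map_inv, h1, h2]

/-! NM wrappers -/
lemma NM_mul {a b : Gsd} (ha : NM a) (hb : NM b) : NM (a * b) := by
  rw [← nm_iff] at ha hb ⊢; rw [mul_eq]; exact nm_mul' a b ha hb

lemma NM_conj (g : Gsd) {n : Gsd} (hn : NM n) : NM (g * n * g⁻¹) := by
  rw [← nm_iff] at hn ⊢; rw [mul_eq, mul_eq, inv_eq]; exact nm_conj' g n hn

lemma NM_inv {a : Gsd} (ha : NM a) : NM a⁻¹ := by
  unfold NM at *
  rw [← mul_inv_rev]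
  rw [show a * a = 1 from ha]
  simp

/-! Helper for coset manipulation -/
lemma helper {A B C x u z : Gsd} (hA : NM A) (hB : NM B) (hC : NM C)
    (h : C * z = A * x⁻¹ * (B * u)) : NM (x⁻¹ * u * z⁻¹) := by
  have hC' : C = A * x⁻¹ * (B * u) * z⁻¹ := by rw [← h]; group
  have key : x⁻¹ * u * z⁻¹ = (x⁻¹ * B⁻¹ * x) * A⁻¹ * C := by rw [hC']; group
  rw [key]
  refine NM_mul (NM_mul ?_ (NM_inv hA)) hC
  have := NM_conj x⁻¹ (NM_inv hB)
  rwa [inv_inv] at this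

/-! Elements of the kernel move nothing mod N -/
lemma key_disj (φ : MulAut Gsd) (hφ : ∀ i, cl (φ (grep i)) = i) {g : Gsd} (hg : o3 g) :
    NM (φ g * g⁻¹) ∨ NM (φ g * g) := by
  have h1 : cl (φ g) = cl g := by
    have e : cl g = cl (grep (cl g)) := (clrep _).symm
    have h2 := cl_map φ hg (o3rep (cl g)) e
    rw [h2, hφ (cl g)]
  have := (sim_iff _ _).mp ((L1 (φ g) g (map_o3 φ hg) hg).mpr h1)
  exact this

lemma claimA3 (φ : MulAut Gsd) (hφ : ∀ i, cl (φ (grep i)) = i) {x : Gsd} (hx : o3 x) :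
    NM (φ x * x⁻¹) := by
  rcases key_disj φ hφ hx with h | h
  · exact h
  -- h : NM (φ x * x), derive a contradiction
  exfalso
  obtain ⟨y, hy, hxy, c1, c2, c3, c4⟩ := D1 x hx
  rw [show fmul x y = x * y from (mul_eq x y).symm] at hxy c1 c2 c3 c4
  rw [show finv x = x⁻¹ from (inv_eq x).symm] at c1 c2 c3 c4
  rw [show finv y = y⁻¹ from (inv_eq y).symm] at c3 c4
  rw [show finv (x * y) = (x * y)⁻¹ from (inv_eq _).symm] at c1 c3
  rw [show fmul x⁻¹ y = x⁻¹ * y from (mul_eq _ _).symm] at c1 c2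
  rw [show fmul x⁻¹ y⁻¹ = x⁻¹ * y⁻¹ from (mul_eq _ _).symm] at c3 c4
  rw [show fmul (x⁻¹ * y) (x * y)⁻¹ = x⁻¹ * y * (x * y)⁻¹ from (mul_eq _ _).symm] at c1
  rw [show fmul (x⁻¹ * y) (x * y) = x⁻¹ * y * (x * y) from (mul_eq _ _).symm] at c2
  rw [show fmul (x⁻¹ * y⁻¹) (x * y)⁻¹ = x⁻¹ * y⁻¹ * (x * y)⁻¹ from (mul_eq _ _).symm] at c3
  rw [show fmul (x⁻¹ * y⁻¹) (x * y) = x⁻¹ * y⁻¹ * (x * y) from (mul_eq _ _).symm] at c4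
  rw [nm_iff] at c1 c2 c3 c4
  have hmap : φ (x * y) = φ x * φ y := map_mul φ x y
  rcases key_disj φ hφ hy with hy1 | hy1 <;> rcases key_disj φ hφ hxy with hz1 | hz1
  · refine c1 (helper (x := x) (u := y) (z := x * y) h hy1 hz1 ?_)
    rw [hmap]; group
  · have := helper (x := x) (u := y) (z := (x * y)⁻¹) h hy1 hz1 (by rw [hmap]; group)
    rw [inv_inv] at this
    exact c2 this
  · refine c3 (helper (x := x) (u := y⁻¹) (z := x * y) h hy1 hz1 ?_)
    rw [hmap]; group
  · have := helper (x := x) (u := y⁻¹) (z := (x * y)⁻¹) h hy1 hz1 (by rw [hmap]; group)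
    rw [inv_inv] at this
    exact c4 this

lemma claimA (φ : MulAut Gsd) (hφ : ∀ i, cl (φ (grep i)) = i) (g : Gsd) :
    NM (φ g * g⁻¹) := by
  obtain ⟨hx3, hy3, hg⟩ := dxdy g
  set x := dx g
  set y := dy g
  simp only [← mul_eq] at hx3 hy3 hg
  have Px : NM (φ x * x⁻¹) := by
    by_cases hx1 : x = 1
    · rw [hx1]; unfold NM; simp
    · exact claimA3 φ hφ ((o3_iff x).mpr ⟨hx3, hx1⟩)
  have Py : NM (φ y * y⁻¹) := by
    by_cases hy1 : y = 1
    · rw [hy1]; unfold NM; simp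
    · exact claimA3 φ hφ ((o3_iff y).mpr ⟨hy3, hy1⟩)
  have hsplit : φ g * g⁻¹ = (φ x * x⁻¹) * (x * (φ y * y⁻¹) * x⁻¹) := by
    rw [hg, map_mul]; group
  rw [hsplit]
  exact NM_mul Px (NM_conj x Py)

/-! The omegas are exactly the kernel -/
lemma om_mem (p : pa) : om p ∈ fhom.ker := by
  rw [mem_ker_iff]
  intro i
  have h := w_W p (grep i)
  rw [← mul_eq, ← inv_eq, nm_iff] at h
  have hsim : sim (om p (grep i)) (grep i) := by
    rw [sim_iff]
    exact Or.inl h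
  have := (L1 _ _ (map_o3 (om p) (o3rep i)) (o3rep i)).mp hsim
  rw [this, clrep]

lemma ker_to_om {φ : MulAut Gsd} (hφ : φ ∈ fhom.ker) : ∃ p : pa, om p = φ := by
  have h := claimA φ ((mem_ker_iff φ).mp hφ)
  have ha : nm (fmul (φ ga) (finv ga)) := by
    rw [← mul_eq, ← inv_eq, nm_iff]; exact h ga
  have hs : nm (fmul (φ gs) (finv gs)) := by
    rw [← mul_eq, ← inv_eq, nm_iff]; exact h gs
  obtain ⟨p, hpa, hps⟩ := w_surj _ _ ha hs
  exact ⟨p, gen_eq (om p) φ hpa hps⟩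

lemma card_ker : Nat.card fhom.ker = 16 := by
  have hbij : Function.Bijective (fun p : pa => (⟨om p, om_mem p⟩ : fhom.ker)) := by
    constructor
    · intro p q hpq
      have he : om p = om q := congrArg Subtype.val hpq
      exact w_inj p q (DFunLike.congr_fun he ga) (DFunLike.congr_fun he gs)
    · rintro ⟨φ, hφ⟩
      obtain ⟨p, hp⟩ := ker_to_om hφ
      exact ⟨p, Subtype.ext hp⟩
  have e := Equiv.ofBijective _ hbij
  rw [← Nat.card_congr e]
  rw [Nat.card_eq_fintype_card]
  decide

lemma ker_sq {w : MulAut Gsd} (hw : w ∈ fhom.ker) : w * w = 1 := by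
  obtain ⟨p, rfl⟩ := ker_to_om hw
  apply MulEquiv.ext
  intro g
  show wfun p (wfun p g) = g
  exact w_invol p g

/-! Surjectivity -/
lemma hc : fhom phic = finRotate 4 := by apply Equiv.ext; decide
lemma ht : fhom phit = Equiv.swap 0 (finRotate 4 0) := by apply Equiv.ext; decide

lemma fhom_surj : Function.Surjective fhom := by
  have hclosure := Equiv.Perm.closure_cycle_adjacent_swap (σ := finRotate 4)
    isCycle_finRotate support_finRotate 0
  have hsub : ({finRotate 4, Equiv.swap 0 (finRotate 4 0)} : Set (Equiv.Perm (Fin 4))) ⊆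
      fhom.range := by
    rintro x (rfl | rfl)
    · exact ⟨phic, hc⟩
    · exact ⟨phit, ht⟩
  have htop : fhom.range = ⊤ := by
    apply top_unique
    rw [← hclosure]
    exact (Subgroup.closure_le _).mpr hsub
  exact MonoidHom.range_eq_top.mp htop



/-- Let `G = (ℤ/4ℤ × ℤ/4ℤ) ⋊ ℤ/3ℤ` where the generator of `ℤ/3ℤ` acts by
the matrix `[[0,1],[-1,-1]]` over `ℤ/4ℤ`.  Then there is a normal subgroup `W ⊴ Aut(G)`
which is elementary abelian of order `2⁴ = 16` such that `Aut(G)/W ≅ S₄`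
(expressed by a surjection `Aut(G) → S₄` with kernel `W`). -/
theorem stmt2 :
    ∃ W : Subgroup (MulAut Gsd), W.Normal ∧ (∀ w ∈ W, w * w = 1) ∧ Nat.card W = 16 ∧
      ∃ f : MulAut Gsd →* Equiv.Perm (Fin 4), Function.Surjective f ∧ f.ker = W :=
  ⟨fhom.ker, MonoidHom.normal_ker fhom, fun _ hw => ker_sq hw, card_ker,
    fhom, fhom_surj, rfl⟩
end

section
/- Let F be a field, let A be a finite group with a normal subgroup G, and let 𝒳 : G → GL_n(F) be an irreducible F-representation of G (the space Fⁿ has no nonzero proper 𝒳(G)-invariant subspace). Suppose that for every a ∈ A the conjugate representation g ↦ 𝒳(a g a⁻¹) is equivalent to 𝒳. Let Z = C_{GL_n(F)}(𝒳(G)) be the centralizer of 𝒳(G) in GL_n(F). Then there exist maps 𝒴 : A → GL_n(F) and α : A × A → Z such that for all g ∈ G and a, b ∈ A: (i) 𝒴(g) = 𝒳(g); (ii) 𝒴(a)⁻¹ 𝒳(g) 𝒴(a) = 𝒳(a⁻¹ g a); (iii) 𝒴(a) 𝒴(b) = α(a,b) 𝒴(ab); (iv) α(a,g) = α(g,a)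 = 1. -/
open scoped MatrixGroups

/-- Let `F` be a field, `A` a finite group with a normal subgroup `G`, and
`𝒳 : G → GL_n(F)` an irreducible `F`-representation of `G`.  Suppose that for every `a ∈ A`
the conjugate representation `g ↦ 𝒳(a g a⁻¹)` is equivalent to `𝒳`.  Let
`Z = C_{GL_n(F)}(𝒳(G))`.  Then there exist maps `𝒴 : A → GL_n(F)` and `α : A × A → Z`
such that for all `g ∈ G` and `a, b ∈ A`:
(i) `𝒴(g) = 𝒳(g)`; (ii) `𝒴(a)⁻¹ 𝒳(g) 𝒴(a) = 𝒳(a⁻¹ g a)`;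
(iii) `𝒴(a) 𝒴(b) = α(a,b) 𝒴(ab)`; (iv) `α(a,g) = α(g,a) = 1`. -/
theorem stmt3 (F : Type) [Field F] (n : ℕ) (A : Type) [Group A] [Finite A]
    (G : Subgroup A) (hG : G.Normal)
    (𝒳 : G →* GL (Fin n) F)
    (hirr : ∀ W : Submodule F (Fin n → F),
      (∀ (g : G) (w : Fin n → F), w ∈ W → ((𝒳 g : Matrix (Fin n) (Fin n) F)).mulVec w ∈ W) →
      W = ⊥ ∨ W = ⊤)
    (hinv : ∀ a : A, ∃ P : GL (Fin n) F, ∀ g : G,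
      𝒳 ⟨a * g * a⁻¹, hG.conj_mem g.1 g.2 a⟩ = P * 𝒳 g * P⁻¹) :
    ∃ (Y : A → GL (Fin n) F) (α : A × A → GL (Fin n) F),
      (∀ x : A × A, α x ∈ Subgroup.centralizer (Set.range fun g : G => 𝒳 g)) ∧
      (∀ g : G, Y g = 𝒳 g) ∧
      (∀ (g : G) (a : A),
        (Y a)⁻¹ * 𝒳 g * Y a =
          𝒳 ⟨a⁻¹ * g * a, by simpa using hG.conj_mem g.1 g.2 a⁻¹⟩) ∧
      (∀ a b : A, Y a * Y b = α (a, b) * Y (a * b)) ∧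
      (∀ (g : G) (a : A), α (g, a) = 1 ∧ α (a, g) = 1) := by
  classical
  haveI : G.Normal := hG
  choose P hP using hinv
  set X' : A → GL (Fin n) F := fun x => if h : x ∈ G then 𝒳 ⟨x, h⟩ else 1 with hX'
  have hXcoe : ∀ (x : A) (hx : x ∈ G), 𝒳 ⟨x, hx⟩ = X' x := by
    intro x hx; simp [hX', hx]
  have hXmul : ∀ x y : A, x ∈ G → y ∈ G → X' (x * y) = X' x * X' y := by
    intro x y hx hy
    simp only [hX', dif_pos hx, dif_pos hy, dif_pos (mul_mem hx hy)]
    rw [← map_mul]; rfl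
  have hXinv : ∀ x : A, x ∈ G → X' x⁻¹ = (X' x)⁻¹ := by
    intro x hx
    simp only [hX', dif_pos hx, dif_pos (inv_mem hx)]
    rw [← map_inv]; rfl
  -- section of the quotient
  set s : A ⧸ G → A := fun c => if c = (1 : A ⧸ G) then 1 else c.out with hs_def
  have hs : ∀ c : A ⧸ G, QuotientGroup.mk (s c) = c := by
    intro c
    by_cases h : c = (1 : A ⧸ G)
    · simp [hs_def, h]
    · simp only [hs_def, if_neg h]; exact QuotientGroup.out_eq' c
  have hsmem : ∀ a : A, (s (QuotientGroup.mk a))⁻¹ * a ∈ G := by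
    intro a
    exact QuotientGroup.eq.mp (hs (QuotientGroup.mk a))
  have hmemo : ∀ a : A, a * (s (QuotientGroup.mk a))⁻¹ ∈ G := by
    intro a
    have h := hG.conj_mem _ (hsmem a) a
    have : a * ((s (QuotientGroup.mk a))⁻¹ * a) * a⁻¹ = a * (s (QuotientGroup.mk a))⁻¹ := by
      group
    rwa [this] at h
  set Qm : A ⧸ G → GL (Fin n) F :=
    fun c => if c = (1 : A ⧸ G) then 1 else P (s c) with hQm_def
  -- key conjugation property of Qm
  have hQ : ∀ (c : A ⧸ G) (x : A), x ∈ G →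
      (Qm c)⁻¹ * X' x * Qm c = X' ((s c)⁻¹ * x * s c) := by
    intro c x hx
    by_cases h : c = (1 : A ⧸ G)
    · simp only [hQm_def, hs_def, if_pos h]
      simp
    · simp only [hQm_def, hs_def, if_neg h]
      have hmem : (s c)⁻¹ * x * s c ∈ G := by
        have := hG.conj_mem _ hx (s c)⁻¹
        simpa using this
      have := hP (s c) ⟨(s c)⁻¹ * x * s c, hmem⟩
      have he : (⟨s c * ((s c)⁻¹ * x * s c) * (s c)⁻¹, hG.conj_mem _ hmem (s c)⟩ : G) = ⟨x, hx⟩ := by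
        ext; group
      rw [he, hXcoe, hXcoe] at this
      simp only [hs_def, if_neg h] at this
      rw [this]
      group
  have hQf : ∀ (c : A ⧸ G) (x : A), x ∈ G →
      Qm c * X' x = X' (s c * x * (s c)⁻¹) * Qm c := by
    intro c x hx
    have hmem : s c * x * (s c)⁻¹ ∈ G := hG.conj_mem _ hx (s c)
    have := hQ c _ hmem
    have he : (s c)⁻¹ * (s c * x * (s c)⁻¹) * s c = x := by group
    rw [he] at this
    rw [← this]
    group
  set Y : A → GL (Fin n) F :=
    fun a => X' (a * (s (QuotientGroup.mk a))⁻¹) * Qm (QuotientGroup.mk a) with hY_def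
  -- (i)
  have hmk1 : ∀ (x : A), x ∈ G → QuotientGroup.mk x = (1 : A ⧸ G) := by
    intro x hx
    exact (QuotientGroup.eq_one_iff x).mpr hx
  have hYi : ∀ (x : A) (hx : x ∈ G), Y x = X' x := by
    intro x hx
    simp [hY_def, hQm_def, hs_def, hmk1 x hx, hx]
  -- (ii) general form
  have hYconj : ∀ (a x : A), x ∈ G → (Y a)⁻¹ * X' x * Y a = X' (a⁻¹ * x * a) := by
    intro a x hx
    set t := s (QuotientGroup.mk a) with ht
    have hmem2 : t * (a⁻¹ * x * a) * t⁻¹ ∈ G := by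
      have h2 : a⁻¹ * x * a ∈ G := by simpa using hG.conj_mem _ hx a⁻¹
      exact hG.conj_mem _ h2 t
    have step1 : (X' (a * t⁻¹))⁻¹ * X' x * X' (a * t⁻¹) = X' (t * (a⁻¹ * x * a) * t⁻¹) := by
      rw [← hXinv _ (hmemo a)]
      rw [← hXmul _ _ (inv_mem (hmemo a)) hx, ← hXmul _ _ (mul_mem (inv_mem (hmemo a)) hx) (hmemo a)]
      congr 1
      group
      rfl
    have step2 := hQ (QuotientGroup.mk a) _ hmem2
    have he : t⁻¹ * (t * (a⁻¹ * x * a) * t⁻¹) * t = a⁻¹ * x * a := by group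
    rw [he] at step2
    calc (Y a)⁻¹ * X' x * Y a
        = (Qm (QuotientGroup.mk a))⁻¹ * ((X' (a * t⁻¹))⁻¹ * X' x * X' (a * t⁻¹)) *
            Qm (QuotientGroup.mk a) := by
          simp only [hY_def, ← ht, mul_inv_rev]
          group
      _ = (Qm (QuotientGroup.mk a))⁻¹ * X' (t * (a⁻¹ * x * a) * t⁻¹) *
            Qm (QuotientGroup.mk a) := by rw [step1]
      _ = X' (a⁻¹ * x * a) := step2
  have hYconjf : ∀ (a x : A), x ∈ G → Y a * X' x * (Y a)⁻¹ = X' (a * x * a⁻¹) := by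
    intro a x hx
    have := hYconj a _ (hG.conj_mem _ hx a)
    have he : a⁻¹ * (a * x * a⁻¹) * a = x := by group
    rw [he] at this
    rw [← this]
    group
  set α : A × A → GL (Fin n) F := fun p => Y p.1 * Y p.2 * (Y (p.1 * p.2))⁻¹ with hα_def
  refine ⟨Y, α, ?_, ?_, ?_, ?_, ?_⟩
  · -- centralizer
    intro p
    rw [Subgroup.mem_centralizer_iff]
    rintro h ⟨g, rfl⟩
    obtain ⟨a, b⟩ := p
    show 𝒳 g * α (a, b) = α (a, b) * 𝒳 g
    rw [hXcoe _ g.2]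
    have key : α (a, b) * X' g * (α (a, b))⁻¹ = X' g := by
      have hg : (g : A) ∈ G := g.2
      have h1 : b⁻¹ * (a⁻¹ * g * a) * b ∈ G := by
        have := hG.conj_mem _ (by simpa using hG.conj_mem _ hg a⁻¹) b⁻¹
        simpa [mul_assoc] using this
      calc α (a, b) * X' g * (α (a, b))⁻¹
          = Y a * (Y b * ((Y (a * b))⁻¹ * X' g * Y (a * b)) * (Y b)⁻¹) * (Y a)⁻¹ := by
            simp only [hα_def]; group
        _ = Y a * (Y b * X' ((a*b)⁻¹ * g * (a*b)) * (Y b)⁻¹) * (Y a)⁻¹ := by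
            rw [hYconj _ _ hg]
        _ = Y a * X' (b * ((a*b)⁻¹ * g * (a*b)) * b⁻¹) * (Y a)⁻¹ := by
            rw [← hYconjf b _ (by simpa [mul_assoc] using h1)]
        _ = X' (a * (b * ((a*b)⁻¹ * g * (a*b)) * b⁻¹) * a⁻¹) := by
            rw [← hYconjf a _ (by
              have : b * ((a*b)⁻¹ * g * (a*b)) * b⁻¹ = a⁻¹ * g * a := by group
              rw [this]; simpa using hG.conj_mem _ hg a⁻¹)]
        _ = X' g := by congr 1; group
    calc X' g * α (a, b) = (α (a,b) * X' g * (α (a,b))⁻¹) * α (a,b) := by rw [key]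
      _ = α (a,b) * X' g := by group
  · -- (i)
    intro g
    rw [hYi _ g.2, hXcoe _ g.2]
  · -- (ii)
    intro g a
    rw [hXcoe, hXcoe _ (by simpa using hG.conj_mem g.1 g.2 a⁻¹)]
    exact hYconj a _ g.2
  · -- (iii)
    intro a b
    simp only [hα_def]
    group
  · -- (iv)
    intro g a
    have hg : (g : A) ∈ G := g.2
    constructor
    · -- α (g, a) = 1 : need Y (g * a) = Y g * Y a
      have hmk : QuotientGroup.mk ((g : A) * a) = (QuotientGroup.mk a : A ⧸ G) := by
        refine QuotientGroup.eq.mpr ?_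
        have : ((g:A) * a)⁻¹ * a = a⁻¹ * (g:A)⁻¹ * a := by group
        rw [this]
        simpa [mul_assoc] using hG.conj_mem _ (inv_mem hg) a⁻¹
      have : Y ((g : A) * a) = Y (g : A) * Y a := by
        rw [hYi _ hg]
        simp only [hY_def, hmk]
        rw [← mul_assoc, ← hXmul _ _ hg (hmemo a)]
        congr 2
        group
      simp only [hα_def]
      rw [this]
      group
    · -- α (a, g) = 1 : need Y (a * g) = Y a * Y g
      have hmk : QuotientGroup.mk (a * (g : A)) = (QuotientGroup.mk a : A ⧸ G) := by
        refine QuotientGroup.eq.mpr ?_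
        have : (a * (g:A))⁻¹ * a = (g:A)⁻¹ := by group
        rw [this]; exact inv_mem hg
      set t := s (QuotientGroup.mk a) with ht
      have : Y (a * (g : A)) = Y a * Y (g : A) := by
        rw [hYi _ hg]
        simp only [hY_def, hmk, ← ht]
        rw [mul_assoc (X' (a * t⁻¹)), hQf _ _ hg]
        rw [← mul_assoc, ← hXmul _ _ (hmemo a) (hG.conj_mem _ hg t)]
        congr 2
        rw [← ht]
        group
      simp only [hα_def]
      rw [this]
      group
end

section
/- Let A be a finite abelian group, Q a finite group, and 𝒞 : Q → Aut(A) an injective homomorphism, and let G = A ⋊ Q be the corresponding semidirect product. Let Aut_A(G) = { σ ∈ Aut(G) : σ(A) = A } be the subgroup of automorphisms of G leaving A invariant. Then there is a short exact sequence of groups 0 → Z¹(Q,A) → Aut_A(G) → N_{Aut(A)}(𝒞(Q)) → 1; that is, there is a surjective homomorphism Aut_A(G) → N_{Aut(A)}(𝒞(Q)) whose kernel is isomorphic to the group Z¹(Q,A) of 1-cocycles. -/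
/-- The group of 1-cocycles `Z¹(Q,A)` of `Q` with coefficients in the `Q`-group `A`
(written multiplicatively), for the action `𝒞 : Q → Aut(A)`. -/
def oneCocyclesGrp {A : Type} [CommGroup A] {Q : Type} [Group Q]
    (𝒞 : Q →* MulAut A) : Subgroup (Q → A) where
  carrier := {θ | ∀ x y : Q, θ (x * y) = θ x * 𝒞 x (θ y)}
  one_mem' := fun x y => by simp
  mul_mem' := by
    intro θ η hθ hη x y
    simp only [Pi.mul_apply, hθ x y, hη x y, map_mul]
    exact mul_mul_mul_comm _ _ _ _
  inv_mem' := by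
    intro θ hθ x y
    simp only [Pi.inv_apply, hθ x y, map_inv, mul_inv_rev]
    exact mul_comm _ _

/-- The subgroup `Aut(e)` of automorphisms of `G` leaving the subgroup `μ(A)` invariant. -/
def autOfExt {A : Type} [CommGroup A] {G : Type} [Group G] (μ : A →* G) :
    Subgroup (MulAut G) where
  carrier := {σ | μ.range.map σ.toMonoidHom = μ.range}
  one_mem' := by
    show μ.range.map (1 : MulAut G).toMonoidHom = μ.range
    rw [show ((1 : MulAut G).toMonoidHom) = MonoidHom.id G from rfl, Subgroup.map_id]
  mul_mem' := by
    intro σ τ hσ hτ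
    have : (σ * τ).toMonoidHom = σ.toMonoidHom.comp τ.toMonoidHom := rfl
    show μ.range.map (σ * τ).toMonoidHom = μ.range
    rw [this, ← Subgroup.map_map, hτ, hσ]
  inv_mem' := by
    intro σ hσ
    show μ.range.map σ⁻¹.toMonoidHom = μ.range
    conv_lhs => rw [← hσ]
    rw [Subgroup.map_map]
    have : σ⁻¹.toMonoidHom.comp σ.toMonoidHom = MonoidHom.id G := by
      ext g
      exact σ.symm_apply_apply g
    rw [this, Subgroup.map_id]

namespace Stmt8Aux

open SemidirectProduct

variable {A : Type} [CommGroup A] {Q : Type} [Group Q] {𝒞 : Q →* MulAut A}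

lemma mem_range_inl {g : A ⋊[𝒞] Q} :
    g ∈ (inl : A →* A ⋊[𝒞] Q).range ↔ g.right = 1 := by
  constructor
  · rintro ⟨a, rfl⟩; simp
  · intro h; exact ⟨g.left, by ext <;> simp [h]⟩

lemma inl_left_of {g : A ⋊[𝒞] Q} (h : g.right = 1) : inl g.left = g := by
  ext <;> simp [h]

lemma map_mem (σ : MulAut (A ⋊[𝒞] Q)) (hσ : σ ∈ autOfExt inl) {g : A ⋊[𝒞] Q}
    (hg : g ∈ (inl : A →* A ⋊[𝒞] Q).range) : σ g ∈ (inl : A →* A ⋊[𝒞] Q).range := by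
  have h' : (inl : A →* A ⋊[𝒞] Q).range.map σ.toMonoidHom = (inl : A →* A ⋊[𝒞] Q).range := hσ
  rw [← h']
  exact ⟨g, hg, rfl⟩

lemma restrict_spec (σ : MulAut (A ⋊[𝒞] Q)) (hσ : σ ∈ autOfExt inl) (a : A) :
    inl ((σ (inl a)).left) = σ (inl a) :=
  inl_left_of (mem_range_inl.mp (map_mem σ hσ ⟨a, rfl⟩))

/-- Restriction to `A` as a homomorphism `Aut_A(G) →* Aut A`. -/
def restrictHom : ↥(autOfExt (inl : A →* A ⋊[𝒞] Q)) →* MulAut A where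
  toFun σ :=
    { toFun := fun a => ((σ : MulAut (A ⋊[𝒞] Q)) (inl a)).left
      invFun := fun a => (((σ : MulAut (A ⋊[𝒞] Q)))⁻¹ (inl a)).left
      left_inv := fun a => by
        show (((σ : MulAut (A ⋊[𝒞] Q)))⁻¹ (inl (((σ : MulAut (A ⋊[𝒞] Q)) (inl a)).left))).left = a
        rw [restrict_spec _ σ.2]
        simp [MulAut.inv_def]
      right_inv := fun a => by
        show (((σ : MulAut (A ⋊[𝒞] Q))) (inl ((((σ : MulAut (A ⋊[𝒞] Q)))⁻¹ (inl a)).left))).left = a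
        rw [restrict_spec _ (inv_mem σ.2)]
        simp [MulAut.inv_def]
      map_mul' := fun a b => by
        apply inl_injective (φ := 𝒞)
        rw [map_mul inl (((σ : MulAut (A ⋊[𝒞] Q)) (inl a)).left), restrict_spec _ σ.2, restrict_spec _ σ.2, restrict_spec _ σ.2,
          ← map_mul, ← map_mul] }
  map_one' := by ext a; simp
  map_mul' σ τ := by
    ext a
    show (((σ : MulAut (A ⋊[𝒞] Q)) * τ) (inl a)).left
      = ((σ : MulAut (A ⋊[𝒞] Q)) (inl (((τ : MulAut (A ⋊[𝒞] Q)) (inl a)).left))).left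
    rw [restrict_spec _ τ.2]
    rfl

lemma restrictHom_apply (σ : ↥(autOfExt (inl : A →* A ⋊[𝒞] Q))) (a : A) :
    restrictHom σ a = ((σ : MulAut (A ⋊[𝒞] Q)) (inl a)).left := rfl

lemma conj_left (g x : A ⋊[𝒞] Q) (hx : x.right = 1) :
    g * x * g⁻¹ = inl (𝒞 g.right x.left) := by
  ext <;> simp [hx, mul_comm, mul_left_comm, mul_assoc]

lemma conj_formula (σ : MulAut (A ⋊[𝒞] Q)) (hσ : σ ∈ autOfExt inl) (q : Q) (a : A) :
    σ (inl (𝒞 q a)) = inl (𝒞 ((σ (inr q)).right) ((σ (inl a)).left)) := by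
  have h1 : (inl (𝒞 q a) : A ⋊[𝒞] Q) = inr q * inl a * (inr q)⁻¹ := by
    rw [inl_aut]; rw [map_inv]
  rw [h1, map_mul, map_mul, map_inv]
  exact conj_left _ _ (mem_range_inl.mp (map_mem σ hσ ⟨a, rfl⟩))

lemma ker_fix {σ : ↥(autOfExt (inl : A →* A ⋊[𝒞] Q))}
    (h : σ ∈ (restrictHom (𝒞 := 𝒞)).ker) (a : A) :
    (σ : MulAut (A ⋊[𝒞] Q)) (inl a) = inl a := by
  have h1 : restrictHom σ = 1 := h
  have h2 : restrictHom σ a = a := by rw [h1]; rfl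
  rw [← restrict_spec _ σ.2 a]
  exact congrArg inl h2

lemma mem_ker_of_fix {σ : ↥(autOfExt (inl : A →* A ⋊[𝒞] Q))}
    (h : ∀ a, (σ : MulAut (A ⋊[𝒞] Q)) (inl a) = inl a) :
    σ ∈ (restrictHom (𝒞 := 𝒞)).ker := by
  show restrictHom σ = 1
  ext a
  show ((σ : MulAut (A ⋊[𝒞] Q)) (inl a)).left = a
  rw [h a]; rfl

lemma right_inr_of_ker (hC : Function.Injective 𝒞)
    {σ : ↥(autOfExt (inl : A →* A ⋊[𝒞] Q))} (h : σ ∈ (restrictHom (𝒞 := 𝒞)).ker) (q : Q) :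
    ((σ : MulAut (A ⋊[𝒞] Q)) (inr q)).right = q := by
  apply hC
  ext a
  have := conj_formula (σ : MulAut (A ⋊[𝒞] Q)) σ.2 q a
  rw [ker_fix h, ker_fix h] at this
  simpa using inl_injective this.symm

lemma sigma_inr_of_ker (hC : Function.Injective 𝒞)
    {σ : ↥(autOfExt (inl : A →* A ⋊[𝒞] Q))} (h : σ ∈ (restrictHom (𝒞 := 𝒞)).ker) (q : Q) :
    (σ : MulAut (A ⋊[𝒞] Q)) (inr q)
      = ⟨((σ : MulAut (A ⋊[𝒞] Q)) (inr q)).left, q⟩ := by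
  ext
  · rfl
  · exact right_inr_of_ker hC h q

lemma theta_one {θ : Q → A} (hθ : θ ∈ oneCocyclesGrp 𝒞) : θ 1 = 1 := by
  have h := hθ 1 1
  simp only [mul_one, map_one, MulAut.one_apply] at h
  exact (left_eq_mul.mp h)

/-- The automorphism of `G` determined by a 1-cocycle. -/
def sigmaOf (θ : ↥(oneCocyclesGrp 𝒞)) : MulAut (A ⋊[𝒞] Q) where
  toFun g := ⟨g.left * θ.1 g.right, g.right⟩
  invFun g := ⟨g.left * (θ.1 g.right)⁻¹, g.right⟩
  left_inv g := by ext <;> simp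
  right_inv g := by ext <;> simp
  map_mul' g h := by
    ext
    · show (g * h).left * θ.1 ((g * h).right)
        = (g.left * θ.1 g.right) * 𝒞 g.right (h.left * θ.1 h.right)
      rw [mul_left, mul_right, θ.2 g.right h.right, map_mul]
      simp [mul_comm, mul_left_comm, mul_assoc]
    · show (g * h).right = g.right * h.right
      rw [mul_right]

lemma sigmaOf_fix (θ : ↥(oneCocyclesGrp 𝒞)) (a : A) : sigmaOf θ (inl a) = inl a := by
  show (⟨(inl a : A ⋊[𝒞] Q).left * θ.1 ((inl a : A ⋊[𝒞] Q).right),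
    (inl a : A ⋊[𝒞] Q).right⟩ : A ⋊[𝒞] Q) = inl a
  simp [theta_one θ.2]

lemma mem_autOfExt_of (σ : MulAut (A ⋊[𝒞] Q)) (ρ : MulAut A)
    (h : ∀ a, σ (inl a) = inl (ρ a)) : σ ∈ autOfExt (inl : A →* A ⋊[𝒞] Q) := by
  show (inl : A →* A ⋊[𝒞] Q).range.map σ.toMonoidHom = (inl : A →* A ⋊[𝒞] Q).range
  apply le_antisymm
  · rintro _ ⟨_, ⟨a, rfl⟩, rfl⟩
    exact ⟨ρ a, (h a).symm⟩
  · rintro _ ⟨a, rfl⟩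
    refine ⟨inl (ρ⁻¹ a), ⟨ρ⁻¹ a, rfl⟩, ?_⟩
    show σ (inl (ρ⁻¹ a)) = inl a
    rw [h, MulAut.apply_inv_self]

end Stmt8Aux

namespace Stmt8Aux

open SemidirectProduct

variable {A : Type} [CommGroup A] {Q : Type} [Group Q] {𝒞 : Q →* MulAut A}

lemma sigmaOf_mem (θ : ↥(oneCocyclesGrp 𝒞)) :
    sigmaOf θ ∈ autOfExt (inl : A →* A ⋊[𝒞] Q) :=
  mem_autOfExt_of _ 1 (fun a => by rw [sigmaOf_fix]; rfl)

lemma sigmaOf_mem_ker (θ : ↥(oneCocyclesGrp 𝒞)) :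
    (⟨sigmaOf θ, sigmaOf_mem θ⟩ : ↥(autOfExt (inl : A →* A ⋊[𝒞] Q)))
      ∈ (restrictHom (𝒞 := 𝒞)).ker :=
  mem_ker_of_fix (fun a => sigmaOf_fix θ a)

lemma theta_cocycle (hC : Function.Injective 𝒞)
    {σ : ↥(autOfExt (inl : A →* A ⋊[𝒞] Q))} (h : σ ∈ (restrictHom (𝒞 := 𝒞)).ker) :
    (fun q => ((σ : MulAut (A ⋊[𝒞] Q)) (inr q)).left) ∈ oneCocyclesGrp 𝒞 := by
  intro x y
  show ((σ : MulAut (A ⋊[𝒞] Q)) (inr (x * y))).left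
    = ((σ : MulAut (A ⋊[𝒞] Q)) (inr x)).left * 𝒞 x (((σ : MulAut (A ⋊[𝒞] Q)) (inr y)).left)
  have h1 : (inr (x * y) : A ⋊[𝒞] Q) = inr x * inr y := map_mul inr x y
  have h2 : ((σ : MulAut (A ⋊[𝒞] Q)) (inr x * inr y)).left
      = ((σ : MulAut (A ⋊[𝒞] Q)) (inr x)).left
        * 𝒞 (((σ : MulAut (A ⋊[𝒞] Q)) (inr x)).right)
          ((σ : MulAut (A ⋊[𝒞] Q)) (inr y)).left := by
    rw [map_mul]; exact mul_left _ _
  rw [h1, h2, right_inr_of_ker hC h x]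

/-- The kernel of the restriction map is isomorphic to the cocycle group. -/
noncomputable def kerEquiv (hC : Function.Injective 𝒞) :
    (restrictHom (𝒞 := 𝒞)).ker ≃* ↥(oneCocyclesGrp 𝒞) where
  toFun σ := ⟨fun q => ((σ.1 : MulAut (A ⋊[𝒞] Q)) (inr q)).left, theta_cocycle hC σ.2⟩
  invFun θ := ⟨⟨sigmaOf θ, sigmaOf_mem θ⟩, sigmaOf_mem_ker θ⟩
  left_inv σ := by
    apply Subtype.ext; apply Subtype.ext
    apply MulEquiv.ext; intro g
    show (⟨g.left * ((σ.1 : MulAut (A ⋊[𝒞] Q)) (inr g.right)).left, g.right⟩ : A ⋊[𝒞] Q)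
      = (σ.1 : MulAut (A ⋊[𝒞] Q)) g
    conv_rhs => rw [← inl_left_mul_inr_right g]
    rw [map_mul, ker_fix σ.2]
    conv_rhs => rw [sigma_inr_of_ker hC σ.2 g.right]
    ext <;> simp
  right_inv θ := by
    apply Subtype.ext
    funext q
    show (sigmaOf θ (inr q)).left = θ.1 q
    show (inr q : A ⋊[𝒞] Q).left * θ.1 ((inr q : A ⋊[𝒞] Q).right) = θ.1 q
    simp
  map_mul' σ τ := by
    apply Subtype.ext
    funext q
    show ((σ.1 : MulAut (A ⋊[𝒞] Q)) ((τ.1 : MulAut (A ⋊[𝒞] Q)) (inr q))).left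
      = ((σ.1 : MulAut (A ⋊[𝒞] Q)) (inr q)).left * ((τ.1 : MulAut (A ⋊[𝒞] Q)) (inr q)).left
    conv_lhs => rw [sigma_inr_of_ker hC τ.2 q, mk_eq_inl_mul_inr, map_mul, ker_fix σ.2]
    rw [mul_left]
    simp [mul_comm]

end Stmt8Aux

namespace Stmt8Aux

open SemidirectProduct

variable {A : Type} [CommGroup A] {Q : Type} [Group Q] {𝒞 : Q →* MulAut A}

/-- The map induced on `Q` by an automorphism preserving `A`. -/
def piHom (σ : ↥(autOfExt (inl : A →* A ⋊[𝒞] Q))) : Q →* Q :=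
  rightHom.comp ((σ : MulAut (A ⋊[𝒞] Q)).toMonoidHom.comp inr)

lemma piHom_apply (σ : ↥(autOfExt (inl : A →* A ⋊[𝒞] Q))) (q : Q) :
    piHom σ q = ((σ : MulAut (A ⋊[𝒞] Q)) (inr q)).right := rfl

lemma piHom_injective (σ : ↥(autOfExt (inl : A →* A ⋊[𝒞] Q))) :
    Function.Injective (piHom (𝒞 := 𝒞) σ) := by
  rw [injective_iff_map_eq_one]
  intro q hq
  have h1 : (σ : MulAut (A ⋊[𝒞] Q)) (inr q) ∈ (inl : A →* A ⋊[𝒞] Q).range :=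
    mem_range_inl.mpr hq
  have h2 : (inl : A →* A ⋊[𝒞] Q).range.map (σ : MulAut (A ⋊[𝒞] Q)).toMonoidHom
      = (inl : A →* A ⋊[𝒞] Q).range := σ.2
  rw [← h2] at h1
  obtain ⟨x, hx, hx2⟩ := h1
  have hx3 : x = inr q := (σ : MulAut (A ⋊[𝒞] Q)).injective hx2
  subst hx3
  have := mem_range_inl.mp hx
  simpa using this

lemma restrict_conj (σ : ↥(autOfExt (inl : A →* A ⋊[𝒞] Q))) (q : Q) (a : A) :
    restrictHom σ (𝒞 q a) = 𝒞 (piHom σ q) (restrictHom σ a) := by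
  rw [restrictHom_apply, conj_formula (σ : MulAut (A ⋊[𝒞] Q)) σ.2 q a, left_inl]
  rfl

lemma conj_mulaut (σ : ↥(autOfExt (inl : A →* A ⋊[𝒞] Q))) (q : Q) :
    restrictHom σ * 𝒞 q * (restrictHom σ)⁻¹ = 𝒞 (piHom σ q) := by
  ext a
  show restrictHom σ (𝒞 q ((restrictHom σ)⁻¹ a)) = 𝒞 (piHom σ q) a
  rw [restrict_conj, MulAut.apply_inv_self]

lemma restrict_mem_normalizer [Finite Q] (σ : ↥(autOfExt (inl : A →* A ⋊[𝒞] Q))) :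
    restrictHom σ ∈ Subgroup.normalizer (𝒞.range : Set (MulAut A)) := by
  rw [Subgroup.mem_normalizer_iff]
  intro n
  constructor
  · rintro ⟨q, rfl⟩
    exact ⟨piHom σ q, (conj_mulaut σ q).symm⟩
  · rintro ⟨q, hq⟩
    obtain ⟨q', hq'⟩ := Finite.injective_iff_surjective.mp (piHom_injective σ) q
    refine ⟨q', ?_⟩
    have h : restrictHom σ * 𝒞 q' * (restrictHom σ)⁻¹
        = restrictHom σ * n * (restrictHom σ)⁻¹ := by
      rw [conj_mulaut, hq', hq]
    exact mul_left_cancel (mul_right_cancel h)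

section ofNormalizer

variable {ρ : MulAut A}

lemma conj_mem (ρ : MulAut A) (hρ : ρ ∈ Subgroup.normalizer (𝒞.range : Set (MulAut A))) (q : Q) : ρ * 𝒞 q * ρ⁻¹ ∈ 𝒞.range :=
  (Subgroup.mem_normalizer_iff.mp hρ (𝒞 q)).mp ⟨q, rfl⟩

/-- The map induced on `Q` by an element of the normalizer. -/
noncomputable def phiOf (ρ : MulAut A) (hρ : ρ ∈ Subgroup.normalizer (𝒞.range : Set (MulAut A))) : Q → Q :=
  fun q => Classical.choose (conj_mem ρ hρ q)

lemma phiOf_spec (ρ : MulAut A) (hρ : ρ ∈ Subgroup.normalizer (𝒞.range : Set (MulAut A))) (q : Q) :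
    𝒞 (phiOf ρ hρ q) = ρ * 𝒞 q * ρ⁻¹ :=
  Classical.choose_spec (conj_mem ρ hρ q)

variable (ρ : MulAut A) (hρ : ρ ∈ Subgroup.normalizer (𝒞.range : Set (MulAut A))) (hC : Function.Injective 𝒞)

lemma phi_inv_phi (ρ : MulAut A) (hρ : ρ ∈ Subgroup.normalizer (𝒞.range : Set (MulAut A))) (hC : Function.Injective 𝒞) (q : Q) : phiOf ρ⁻¹ (inv_mem hρ) (phiOf ρ hρ q) = q := by
  apply hC
  rw [phiOf_spec, phiOf_spec]
  group

lemma phi_phi_inv (ρ : MulAut A) (hρ : ρ ∈ Subgroup.normalizer (𝒞.range : Set (MulAut A))) (hC : Function.Injective 𝒞) (q : Q) : phiOf ρ hρ (phiOf ρ⁻¹ (inv_mem hρ) q) = q := by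
  apply hC
  rw [phiOf_spec, phiOf_spec]
  group

lemma phi_one (ρ : MulAut A) (hρ : ρ ∈ Subgroup.normalizer (𝒞.range : Set (MulAut A))) (hC : Function.Injective 𝒞) : phiOf ρ hρ 1 = 1 := by
  apply hC
  rw [phiOf_spec, map_one]
  group

/-- The automorphism of `G` induced by an element of the normalizer. -/
noncomputable def sigmaOfRho (ρ : MulAut A) (hρ : ρ ∈ Subgroup.normalizer (𝒞.range : Set (MulAut A)))
    (hC : Function.Injective 𝒞) : MulAut (A ⋊[𝒞] Q) where
  toFun g := ⟨ρ g.left, phiOf ρ hρ g.right⟩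
  invFun g := ⟨ρ⁻¹ g.left, phiOf ρ⁻¹ (inv_mem hρ) g.right⟩
  left_inv g := by
    ext
    · show ρ⁻¹ (ρ g.left) = g.left
      simp
    · exact phi_inv_phi ρ hρ hC g.right
  right_inv g := by
    ext
    · show ρ (ρ⁻¹ g.left) = g.left
      simp
    · exact phi_phi_inv ρ hρ hC g.right
  map_mul' g h := by
    ext
    · show ρ ((g * h).left) = ρ g.left * 𝒞 (phiOf ρ hρ g.right) (ρ h.left)
      rw [mul_left, map_mul]
      congr 1
      rw [phiOf_spec]
      show ρ (𝒞 g.right h.left) = ρ (𝒞 g.right (ρ⁻¹ (ρ h.left)))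
      rw [MulAut.inv_apply_self]
    · show phiOf ρ hρ ((g * h).right) = phiOf ρ hρ g.right * phiOf ρ hρ h.right
      apply hC
      rw [mul_right, phiOf_spec, map_mul, map_mul, phiOf_spec, phiOf_spec]
      group

lemma sigmaOfRho_fix (ρ : MulAut A) (hρ : ρ ∈ Subgroup.normalizer (𝒞.range : Set (MulAut A)))
    (hC : Function.Injective 𝒞) (a : A) : sigmaOfRho ρ hρ hC (inl a) = inl (ρ a) := by
  show (⟨ρ ((inl a : A ⋊[𝒞] Q).left), phiOf ρ hρ ((inl a : A ⋊[𝒞] Q).right)⟩ : A ⋊[𝒞] Q)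
    = inl (ρ a)
  ext
  · simp
  · simp [phi_one ρ hρ hC]

lemma sigmaOfRho_mem (ρ : MulAut A) (hρ : ρ ∈ Subgroup.normalizer (𝒞.range : Set (MulAut A)))
    (hC : Function.Injective 𝒞) : sigmaOfRho ρ hρ hC ∈ autOfExt (inl : A →* A ⋊[𝒞] Q) :=
  mem_autOfExt_of _ ρ (sigmaOfRho_fix ρ hρ hC)

lemma restrict_sigmaOfRho (ρ : MulAut A) (hρ : ρ ∈ Subgroup.normalizer (𝒞.range : Set (MulAut A)))
    (hC : Function.Injective 𝒞) :
    restrictHom (⟨sigmaOfRho ρ hρ hC, sigmaOfRho_mem ρ hρ hC⟩ :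
      ↥(autOfExt (inl : A →* A ⋊[𝒞] Q))) = ρ := by
  ext a
  show ((sigmaOfRho ρ hρ hC) (inl a)).left = ρ a
  rw [sigmaOfRho_fix, left_inl]

end ofNormalizer

lemma range_restrictHom [Finite Q] (hC : Function.Injective 𝒞) :
    Set.range (restrictHom (𝒞 := 𝒞)) = (Subgroup.normalizer (𝒞.range : Set (MulAut A)) : Set (MulAut A)) := by
  ext ρ
  constructor
  · rintro ⟨σ, rfl⟩
    exact restrict_mem_normalizer σ
  · intro hρ
    exact ⟨⟨sigmaOfRho ρ hρ hC, sigmaOfRho_mem ρ hρ hC⟩, restrict_sigmaOfRho ρ hρ hC⟩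

end Stmt8Aux

/-- Let `A` be a finite abelian group, `Q` a finite group,
`𝒞 : Q → Aut(A)` an injective homomorphism and `G = A ⋊ Q` the corresponding semidirect
product.  Let `Aut_A(G)` be the subgroup of automorphisms of `G` leaving `A` invariant.
Then there is a short exact sequence `0 → Z¹(Q,A) → Aut_A(G) → N_{Aut(A)}(𝒞(Q)) → 1`:
expressed here by a homomorphism `f : Aut_A(G) → Aut(A)` whose image is exactly the
normalizer `N_{Aut(A)}(𝒞(Q))` and whose kernel is isomorphic to `Z¹(Q,A)`. -/
theorem stmt8 (A : Type) [CommGroup A] [Finite A] (Q : Type) [Group Q] [Finite Q]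
    (𝒞 : Q →* MulAut A) (hC : Function.Injective 𝒞) :
    ∃ f : ↥(autOfExt (SemidirectProduct.inl : A →* A ⋊[𝒞] Q)) →* MulAut A,
      Set.range f = (Subgroup.normalizer (𝒞.range : Set (MulAut A)) : Set (MulAut A)) ∧
      Nonempty (f.ker ≃* ↥(oneCocyclesGrp 𝒞)) :=
  ⟨Stmt8Aux.restrictHom, Stmt8Aux.range_restrictHom hC, ⟨Stmt8Aux.kerEquiv hC⟩⟩
end
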